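/- Consider the multitype Galton–Watson process arising from an m-ary tree indexed Markov process with reversible transition matrix P (so the mean matrix is M = mP). For any eigenvector f_j of P with eigenvalue λ_j, the variance of ⟨Z_t, f_j⟩ satisfies: Var(⟨Z_t, f_j⟩) = O((mλ_j)^{2t}) if mλ_j² > 1; O(t(mλ_j)^{2t}) if mλ_j² = 1; and O(m^t) if mλ_j² < 1. -/

import Mathlib

open MeasureTheory ProbabilityTheory BigOperators Matrix

lemma aux_mul_integrable {Ω : Type*} {m0 : MeasurableSpace Ω} {μ : Measure Ω}
    {g h : Ω → ℝ} (hg : MemLp g 2 μ) (hh : MemLp h 2 μ) :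
    Integrable (fun ω => g ω * h ω) μ := by
  have h1 := ((hg.add hh).integrable_sq.sub hg.integrable_sq).sub hh.integrable_sq
  have h2 : (fun ω => g ω * h ω)
      = fun ω => (((g ω + h ω) ^ 2 - g ω ^ 2) - h ω ^ 2) / 2 := by
    funext ω; ring
  rw [h2]
  exact h1.div_const 2

lemma aux_memlp_mul_const {Ω : Type*} {m0 : MeasurableSpace Ω} {μ : Measure Ω}
    {g : Ω → ℝ} (hg : MemLp g 2 μ) (c : ℝ) : MemLp (fun ω => g ω * c) 2 μ := by
  simpa [mul_comm] using hg.const_mul c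

theorem gw_tree_variance_trichotomy
    {Ω : Type*} {m0 : MeasurableSpace Ω} (μ : Measure Ω) [IsProbabilityMeasure μ]
    (N : ℕ) (m : ℕ) (hm : 1 ≤ m)
    (P : Matrix (Fin N) (Fin N) ℝ)
    (hP_nonneg : ∀ i j, 0 ≤ P i j) (hP_rowsum : ∀ i, ∑ j, P i j = 1)
    (π : Fin N → ℝ) (hπ_pos : ∀ i, 0 < π i) (hπ_sum : ∑ i, π i = 1)
    (hrev : ∀ i j, π i * P i j = π j * P j i)
    (Z : ℕ → Ω → Fin N → ℝ)
    (F : Filtration ℕ m0)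
    (hadapted : ∀ t j, Measurable[F t] (fun ω => Z t ω j))
    (hL2 : ∀ t j, MemLp (fun ω => Z t ω j) 2 μ)
    (i0 : Fin N) (hZ0 : ∀ ω, Z 0 ω = fun j => if j = i0 then (1 : ℝ) else 0)
    (hmean : ∀ t j,
      μ[(fun ω => Z (t + 1) ω j) | F t] =ᵐ[μ]
        fun ω => ∑ i, Z t ω i * ((m : ℝ) * P i j))
    (hsecond : ∀ t j k,
      μ[(fun ω => Z (t + 1) ω j * Z (t + 1) ω k) | F t] =ᵐ[μ]
        fun ω => (∑ i, Z t ω i * ((m : ℝ) * P i j)) * (∑ i, Z t ω i * ((m : ℝ) * P i k))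
          + ∑ i, Z t ω i *
              ((m : ℝ) * ((if j = k then P i j else 0) - P i j * P i k)))
    (f : Fin N → ℝ) (lam : ℝ) (heig : P.mulVec f = lam • f) :
    ((m : ℝ) * lam ^ 2 > 1 →
      ∃ C : ℝ, 0 < C ∧ ∀ t : ℕ,
        variance (fun ω => ∑ j, Z t ω j * f j) μ ≤ C * ((m : ℝ) * lam) ^ (2 * t)) ∧
    ((m : ℝ) * lam ^ 2 = 1 →
      ∃ C : ℝ, 0 < C ∧ ∀ t : ℕ,
        variance (fun ω => ∑ j, Z t ω j * f j) μ ≤ C * t * ((m : ℝ) * lam) ^ (2 * t)) ∧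
    ((m : ℝ) * lam ^ 2 < 1 →
      ∃ C : ℝ, 0 < C ∧ ∀ t : ℕ,
        variance (fun ω => ∑ j, Z t ω j * f j) μ ≤ C * (m : ℝ) ^ t) := by
  classical
  have hm0 : (0:ℝ) ≤ (m:ℝ) := Nat.cast_nonneg m
  -- eigen equation componentwise
  have hfe : ∀ i, ∑ j, P i j * f j = lam * f i := by
    intro i
    have h := congrFun heig i
    simpa [Matrix.mulVec, dotProduct] using h
  -- offspring variance coefficients
  set σ : Fin N → ℝ := fun i => (∑ j, P i j * f j ^ 2) - (lam * f i) ^ 2 with hσdef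
  have hσ0 : ∀ i, 0 ≤ σ i := by
    intro i
    have hcs := Finset.sum_mul_sq_le_sq_mul_sq Finset.univ
      (fun j => Real.sqrt (P i j)) (fun j => Real.sqrt (P i j) * f j)
    have h1 : ∀ j, Real.sqrt (P i j) * (Real.sqrt (P i j) * f j) = P i j * f j := by
      intro j; rw [← mul_assoc, Real.mul_self_sqrt (hP_nonneg i j)]
    have h2 : ∀ j, Real.sqrt (P i j) ^ 2 = P i j := fun j => Real.sq_sqrt (hP_nonneg i j)
    have h3 : ∀ j, (Real.sqrt (P i j) * f j) ^ 2 = P i j * f j ^ 2 := by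
      intro j; rw [mul_pow, h2]
    simp only [h1, h2, h3] at hcs
    rw [hP_rowsum i, one_mul, hfe i] at hcs
    simpa [hσdef] using sub_nonneg.mpr hcs
  set S : ℝ := ∑ i, σ i with hSdef
  have hS0 : 0 ≤ S := Finset.sum_nonneg fun i _ => hσ0 i
  -- integrability
  have hInt1 : ∀ t j, Integrable (fun ω => Z t ω j) μ :=
    fun t j => (hL2 t j).integrable one_le_two
  -- the mean vector
  set q : ℕ → Fin N → ℝ := fun t i => ∫ ω, Z t ω i ∂μ with hqdef
  have hq0 : ∀ i, q 0 i = if i = i0 then (1:ℝ) else 0 := by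
    intro i
    have h : (fun ω => Z 0 ω i) = fun _ : Ω => if i = i0 then (1:ℝ) else 0 := by
      funext ω; rw [hZ0 ω]
    simp only [hqdef, h, integral_const, measure_univ, probReal_univ, ENNReal.toReal_one, one_smul,
      smul_eq_mul, one_mul]
  have hqrec : ∀ t j, q (t+1) j = ∑ i, q t i * ((m:ℝ) * P i j) := by
    intro t j
    have h1 : ∫ ω, (μ[(fun ω => Z (t + 1) ω j) | F t]) ω ∂μ = q (t+1) j :=
      integral_condExp (F.le t)
    have h2 := integral_congr_ae (hmean t j)
    rw [h1] at h2
    rw [h2, integral_finset_sum _ (fun i _ => (hInt1 t i).mul_const _)]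
    exact Finset.sum_congr rfl fun i _ => integral_mul_const _ _
  have hq_nonneg : ∀ t i, 0 ≤ q t i := by
    intro t
    induction t with
    | zero => intro i; rw [hq0]; split <;> norm_num
    | succ t ih =>
      intro j; rw [hqrec]
      exact Finset.sum_nonneg fun i _ =>
        mul_nonneg (ih i) (mul_nonneg hm0 (hP_nonneg i j))
  have hq_sum : ∀ t, ∑ i, q t i = (m:ℝ) ^ t := by
    intro t
    induction t with
    | zero => simp [hq0]
    | succ t ih =>
      calc ∑ j, q (t+1) j = ∑ j, ∑ i, q t i * ((m:ℝ) * P i j) := by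
            exact Finset.sum_congr rfl fun j _ => hqrec t j
        _ = ∑ i, ∑ j, q t i * ((m:ℝ) * P i j) := Finset.sum_comm
        _ = ∑ i, q t i * (m:ℝ) := by
            refine Finset.sum_congr rfl fun i _ => ?_
            rw [← Finset.mul_sum, ← Finset.mul_sum, hP_rowsum i, mul_one]
        _ = (m:ℝ) ^ (t+1) := by rw [← Finset.sum_mul, ih]; ring
  -- the key algebraic identity
  have hkey : ∀ g : Fin N → ℝ, ∑ j, (∑ i, g i * ((m:ℝ) * P i j)) * f j
      = ((m:ℝ) * lam) * ∑ i, g i * f i := by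
    intro g
    calc ∑ j, (∑ i, g i * ((m:ℝ) * P i j)) * f j
        = ∑ j, ∑ i, g i * (m:ℝ) * (P i j * f j) := by
          refine Finset.sum_congr rfl fun j _ => ?_
          rw [Finset.sum_mul]
          exact Finset.sum_congr rfl fun i _ => by ring
      _ = ∑ i, ∑ j, g i * (m:ℝ) * (P i j * f j) := Finset.sum_comm
      _ = ∑ i, g i * (m:ℝ) * (lam * f i) := by
          refine Finset.sum_congr rfl fun i _ => ?_
          rw [← Finset.mul_sum, hfe i]
      _ = ((m:ℝ) * lam) * ∑ i, g i * f i := by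
          rw [Finset.mul_sum]
          exact Finset.sum_congr rfl fun i _ => by ring
  -- the projected process
  set X : ℕ → Ω → ℝ := fun t ω => ∑ j, Z t ω j * f j with hXdef
  have hXL2 : ∀ t, MemLp (X t) 2 μ := fun t =>
    memLp_finset_sum Finset.univ fun j _ => aux_memlp_mul_const (hL2 t j) (f j)
  have hIntX : ∀ t, ∫ ω, X t ω ∂μ = ∑ j, q t j * f j := by
    intro t
    rw [show X t = fun ω => ∑ j, Z t ω j * f j from rfl,
      integral_finset_sum _ (fun j _ => (hInt1 t j).mul_const _)]
    exact Finset.sum_congr rfl fun j _ => integral_mul_const _ _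
  have harec : ∀ t, (∑ j, q (t+1) j * f j) = ((m:ℝ) * lam) * ∑ j, q t j * f j := by
    intro t
    calc ∑ j, q (t+1) j * f j = ∑ j, (∑ i, q t i * ((m:ℝ) * P i j)) * f j := by
          exact Finset.sum_congr rfl fun j _ => by rw [hqrec t j]
      _ = ((m:ℝ) * lam) * ∑ j, q t j * f j := hkey (q t)
  -- generic second-moment expansion
  have hgen : ∀ W : Fin N → Ω → ℝ, (∀ j, MemLp (W j) 2 μ) →
      ∫ ω, (∑ j, W j ω * f j) ^ 2 ∂μ
        = ∑ j, ∑ k, (∫ ω, W j ω * W k ω ∂μ) * (f j * f k) := by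
    intro W hW
    have hint : ∀ j k, Integrable (fun ω => W j ω * W k ω * (f j * f k)) μ :=
      fun j k => (aux_mul_integrable (hW j) (hW k)).mul_const _
    calc ∫ ω, (∑ j, W j ω * f j) ^ 2 ∂μ
        = ∫ ω, ∑ j, ∑ k, W j ω * W k ω * (f j * f k) ∂μ := by
          refine integral_congr_ae (Filter.Eventually.of_forall fun ω => ?_)
          show (∑ j, W j ω * f j) ^ 2 = ∑ j, ∑ k, W j ω * W k ω * (f j * f k)
          rw [sq, Finset.sum_mul_sum]
          exact Finset.sum_congr rfl fun j _ => Finset.sum_congr rfl fun k _ => by ring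
      _ = ∑ j, ∑ k, ∫ ω, W j ω * W k ω * (f j * f k) ∂μ := by
          rw [integral_finset_sum _ (fun j _ => integrable_finset_sum _ fun k _ => hint j k)]
          exact Finset.sum_congr rfl fun j _ => integral_finset_sum _ fun k _ => hint j k
      _ = ∑ j, ∑ k, (∫ ω, W j ω * W k ω ∂μ) * (f j * f k) :=
          Finset.sum_congr rfl fun j _ => Finset.sum_congr rfl fun k _ =>
            integral_mul_const _ _
  -- inner covariance identity
  have hinner : ∀ i, ∑ j, ∑ k,
      ((m:ℝ) * ((if j = k then P i j else 0) - P i j * P i k)) * (f j * f k)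
        = (m:ℝ) * σ i := by
    intro i
    have e1 : ∑ j, ∑ k, ((m:ℝ) * ((if j = k then P i j else 0) - P i j * P i k)) * (f j * f k)
        = (m:ℝ) * ((∑ j, ∑ k, (if j = k then P i j else 0) * (f j * f k))
            - ∑ j, ∑ k, (P i j * f j) * (P i k * f k)) := by
      rw [mul_sub, Finset.mul_sum, Finset.mul_sum, ← Finset.sum_sub_distrib]
      refine Finset.sum_congr rfl fun j _ => ?_
      rw [Finset.mul_sum, Finset.mul_sum, ← Finset.sum_sub_distrib]
      refine Finset.sum_congr rfl fun k _ => by ring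
    rw [e1]
    have e2 : ∑ j, ∑ k, (if j = k then P i j else 0) * (f j * f k)
        = ∑ j, P i j * f j ^ 2 := by
      simp only [ite_mul, zero_mul, Finset.sum_ite_eq, Finset.mem_univ, if_true]
      exact Finset.sum_congr rfl fun j _ => by ring
    have e3 : ∑ j, ∑ k, (P i j * f j) * (P i k * f k) = (lam * f i) ^ 2 := by
      rw [← Finset.sum_mul_sum, hfe i, sq]
    rw [e2, e3, hσdef]
  -- second moment recursion
  have hbrec : ∀ t, ∫ ω, X (t+1) ω ^ 2 ∂μ
      = ((m:ℝ) * lam) ^ 2 * ∫ ω, X t ω ^ 2 ∂μ + (m:ℝ) * ∑ i, q t i * σ i := by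
    intro t
    set A : Fin N → Ω → ℝ := fun j ω => ∑ i, Z t ω i * ((m:ℝ) * P i j) with hAdef
    have hAL2 : ∀ j, MemLp (A j) 2 μ := fun j =>
      memLp_finset_sum Finset.univ fun i _ => aux_memlp_mul_const (hL2 t i) _
    have hDInt : ∀ (c : Fin N → ℝ), Integrable (fun ω => ∑ i, Z t ω i * c i) μ :=
      fun c => integrable_finset_sum _ fun i _ => (hInt1 t i).mul_const _
    have he : ∀ j k, (∫ ω, Z (t+1) ω j * Z (t+1) ω k ∂μ)
        = (∫ ω, A j ω * A k ω ∂μ)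
          + ∑ i, q t i * ((m:ℝ) * ((if j = k then P i j else 0) - P i j * P i k)) := by
      intro j k
      have h1 : ∫ ω, (μ[(fun ω => Z (t + 1) ω j * Z (t + 1) ω k) | F t]) ω ∂μ
          = ∫ ω, Z (t+1) ω j * Z (t+1) ω k ∂μ := integral_condExp (F.le t)
      have h2 := integral_congr_ae (hsecond t j k)
      rw [h1] at h2
      rw [h2, integral_add (aux_mul_integrable (hAL2 j) (hAL2 k)) (hDInt _)]
      congr 1
      rw [integral_finset_sum _ (fun i _ => (hInt1 t i).mul_const _)]
      exact Finset.sum_congr rfl fun i _ => integral_mul_const _ _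
    have hAX : ∀ ω, ∑ j, A j ω * f j = ((m:ℝ) * lam) * X t ω :=
      fun ω => hkey fun i => Z t ω i
    calc ∫ ω, X (t+1) ω ^ 2 ∂μ
        = ∑ j, ∑ k, (∫ ω, Z (t+1) ω j * Z (t+1) ω k ∂μ) * (f j * f k) :=
          hgen (fun j ω => Z (t+1) ω j) (fun j => hL2 (t+1) j)
      _ = (∑ j, ∑ k, (∫ ω, A j ω * A k ω ∂μ) * (f j * f k))
          + ∑ j, ∑ k, (∑ i, q t i *
              ((m:ℝ) * ((if j = k then P i j else 0) - P i j * P i k))) * (f j * f k) := by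
          rw [← Finset.sum_add_distrib]
          refine Finset.sum_congr rfl fun j _ => ?_
          rw [← Finset.sum_add_distrib]
          refine Finset.sum_congr rfl fun k _ => ?_
          rw [he j k, add_mul]
      _ = ((m:ℝ) * lam) ^ 2 * ∫ ω, X t ω ^ 2 ∂μ + (m:ℝ) * ∑ i, q t i * σ i := by
          congr 1
          · rw [← hgen A hAL2]
            calc ∫ ω, (∑ j, A j ω * f j) ^ 2 ∂μ
                = ∫ ω, ((m:ℝ) * lam) ^ 2 * (X t ω ^ 2) ∂μ := by
                  refine integral_congr_ae (Filter.Eventually.of_forall fun ω => ?_)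
                  show (∑ j, A j ω * f j) ^ 2 = ((m:ℝ) * lam) ^ 2 * (X t ω ^ 2)
                  rw [hAX ω, mul_pow]
              _ = ((m:ℝ) * lam) ^ 2 * ∫ ω, X t ω ^ 2 ∂μ := integral_const_mul _ _
          · calc ∑ j, ∑ k, (∑ i, q t i *
                  ((m:ℝ) * ((if j = k then P i j else 0) - P i j * P i k))) * (f j * f k)
                = ∑ j, ∑ k, ∑ i, q t i *
                    (((m:ℝ) * ((if j = k then P i j else 0) - P i j * P i k)) * (f j * f k)) := by
                  refine Finset.sum_congr rfl fun j _ => Finset.sum_congr rfl fun k _ => ?_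
                  rw [Finset.sum_mul]
                  exact Finset.sum_congr rfl fun i _ => by ring
              _ = ∑ j, ∑ i, ∑ k, q t i *
                    (((m:ℝ) * ((if j = k then P i j else 0) - P i j * P i k)) * (f j * f k)) :=
                  Finset.sum_congr rfl fun j _ => Finset.sum_comm
              _ = ∑ i, ∑ j, ∑ k, q t i *
                    (((m:ℝ) * ((if j = k then P i j else 0) - P i j * P i k)) * (f j * f k)) :=
                  Finset.sum_comm
              _ = ∑ i, q t i * ((m:ℝ) * σ i) := by
                  refine Finset.sum_congr rfl fun i _ => ?_
                  simp only [← Finset.mul_sum]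
                  rw [hinner i]
              _ = (m:ℝ) * ∑ i, q t i * σ i := by
                  rw [Finset.mul_sum]
                  exact Finset.sum_congr rfl fun i _ => by ring
  -- variance formula and recursion
  have hvar : ∀ t, variance (X t) μ
      = (∫ ω, X t ω ^ 2 ∂μ) - (∑ j, q t j * f j) ^ 2 := by
    intro t
    rw [variance_eq_sub (hXL2 t), hIntX t]
    rfl
  have hvrec : ∀ t, variance (X (t+1)) μ
      = ((m:ℝ) * lam) ^ 2 * variance (X t) μ + (m:ℝ) * ∑ i, q t i * σ i := by
    intro t
    rw [hvar, hvar, hbrec t, harec t]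
    ring
  have hv0 : variance (X 0) μ = 0 := by
    rw [hvar 0]
    have h1 : ∀ ω, X 0 ω = f i0 := by
      intro ω
      simp only [hXdef, hZ0 ω]
      simp
    have h2 : ∫ ω, X 0 ω ^ 2 ∂μ = f i0 ^ 2 := by
      rw [integral_congr_ae (Filter.Eventually.of_forall fun ω => by rw [h1 ω]),
        integral_const]
      simp
    have h3 : ∑ j, q 0 j * f j = f i0 := by
      rw [Finset.sum_congr rfl fun j _ => by rw [hq0 j]]
      simp
    rw [h2, h3]; ring
  -- bound on source term
  have hw : ∀ t, (m:ℝ) * ∑ i, q t i * σ i ≤ S * (m:ℝ) ^ (t+1) := by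
    intro t
    have h1 : ∑ i, q t i * σ i ≤ ∑ i, q t i * S :=
      Finset.sum_le_sum fun i _ => mul_le_mul_of_nonneg_left
        (Finset.single_le_sum (fun i _ => hσ0 i) (Finset.mem_univ i)) (hq_nonneg t i)
    calc (m:ℝ) * ∑ i, q t i * σ i ≤ (m:ℝ) * ∑ i, q t i * S :=
          mul_le_mul_of_nonneg_left h1 hm0
      _ = S * (m:ℝ) ^ (t+1) := by rw [← Finset.sum_mul, hq_sum t]; ring
  -- main inductive bound
  have hr0 : (0:ℝ) ≤ ((m:ℝ) * lam) ^ 2 := sq_nonneg _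
  have hmain : ∀ t, variance (X t) μ
      ≤ S * ((m:ℝ) ^ t * ∑ s ∈ Finset.range t, ((m:ℝ) * lam ^ 2) ^ s) := by
    intro t
    induction t with
    | zero => simp [hv0]
    | succ t ih =>
      calc variance (X (t+1)) μ
          = ((m:ℝ) * lam) ^ 2 * variance (X t) μ + (m:ℝ) * ∑ i, q t i * σ i := hvrec t
        _ ≤ ((m:ℝ) * lam) ^ 2 * (S * ((m:ℝ) ^ t * ∑ s ∈ Finset.range t, ((m:ℝ) * lam ^ 2) ^ s))
            + S * (m:ℝ) ^ (t+1) :=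
            add_le_add (mul_le_mul_of_nonneg_left ih hr0) (hw t)
        _ = S * ((m:ℝ) ^ (t+1) * ∑ s ∈ Finset.range (t+1), ((m:ℝ) * lam ^ 2) ^ s) := by
            rw [geom_sum_succ]
            ring
  have hrt : ∀ t : ℕ, ((m:ℝ) * lam) ^ (2 * t) = (m:ℝ) ^ t * ((m:ℝ) * lam ^ 2) ^ t := by
    intro t
    rw [pow_mul, show ((m:ℝ) * lam) ^ 2 = (m:ℝ) * ((m:ℝ) * lam ^ 2) from by ring, mul_pow]
  have hx0 : (0:ℝ) ≤ (m:ℝ) * lam ^ 2 := mul_nonneg hm0 (sq_nonneg _)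
  set x : ℝ := (m:ℝ) * lam ^ 2 with hxdef
  refine ⟨?_, ?_, ?_⟩
  · -- supercritical
    intro hx1
    refine ⟨S / (x - 1) + 1, by
      have h := div_nonneg hS0 (by linarith : (0:ℝ) ≤ x - 1); linarith, fun t => ?_⟩
    have hgs : ∑ s ∈ Finset.range t, x ^ s ≤ x ^ t / (x - 1) := by
      rw [le_div_iff₀ (by linarith)]
      rw [geom_sum_mul]
      linarith
    calc variance (fun ω => ∑ j, Z t ω j * f j) μ
        ≤ S * ((m:ℝ) ^ t * ∑ s ∈ Finset.range t, x ^ s) := hmain t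
      _ ≤ S * ((m:ℝ) ^ t * (x ^ t / (x - 1))) := by
          apply mul_le_mul_of_nonneg_left _ hS0
          exact mul_le_mul_of_nonneg_left hgs (pow_nonneg hm0 t)
      _ = (S / (x - 1)) * ((m:ℝ) ^ t * x ^ t) := by
          field_simp
      _ ≤ (S / (x - 1) + 1) * ((m:ℝ) ^ t * x ^ t) := by
          apply mul_le_mul_of_nonneg_right (by linarith)
          exact mul_nonneg (pow_nonneg hm0 t) (pow_nonneg hx0 t)
      _ = (S / (x - 1) + 1) * ((m:ℝ) * lam) ^ (2 * t) := by rw [hrt t]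
  · -- critical
    intro hx1
    refine ⟨S + 1, by positivity, fun t => ?_⟩
    calc variance (fun ω => ∑ j, Z t ω j * f j) μ
        ≤ S * ((m:ℝ) ^ t * ∑ s ∈ Finset.range t, x ^ s) := hmain t
      _ = S * t * ((m:ℝ) ^ t * x ^ t) := by
          rw [hx1]
          simp only [one_pow, Finset.sum_const, Finset.card_range, nsmul_eq_mul, mul_one]
          ring
      _ ≤ (S + 1) * t * ((m:ℝ) ^ t * x ^ t) := by
          have hA : (0:ℝ) ≤ (m:ℝ) ^ t * x ^ t :=
            mul_nonneg (pow_nonneg hm0 t) (pow_nonneg hx0 t)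
          nlinarith [mul_nonneg (Nat.cast_nonneg (α := ℝ) t) hA]
      _ = (S + 1) * t * ((m:ℝ) * lam) ^ (2 * t) := by rw [hrt t]
  · -- subcritical
    intro hx1
    refine ⟨S / (1 - x) + 1, by
      have h := div_nonneg hS0 (by linarith : (0:ℝ) ≤ 1 - x); linarith, fun t => ?_⟩
    have h2 : (∑ s ∈ Finset.range t, x ^ s) * (1 - x) = 1 - x ^ t := by
      have h := geom_sum_mul x t
      linear_combination -h
    have hgs : ∑ s ∈ Finset.range t, x ^ s ≤ 1 / (1 - x) := by
      rw [le_div_iff₀ (by linarith)]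
      rw [h2]
      have := pow_nonneg hx0 t
      linarith
    calc variance (fun ω => ∑ j, Z t ω j * f j) μ
        ≤ S * ((m:ℝ) ^ t * ∑ s ∈ Finset.range t, x ^ s) := hmain t
      _ ≤ S * ((m:ℝ) ^ t * (1 / (1 - x))) := by
          apply mul_le_mul_of_nonneg_left _ hS0
          exact mul_le_mul_of_nonneg_left hgs (pow_nonneg hm0 t)
      _ = (S / (1 - x)) * (m:ℝ) ^ t := by field_simp
      _ ≤ (S / (1 - x) + 1) * (m:ℝ) ^ t := by
          apply mul_le_mul_of_nonneg_right (by linarith) (pow_nonneg hm0 t)
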